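/- For the one-dimensional Kepler problem ṙ'' = -U₀/r² with U₀ > 0, given 0 ≤ a < b and energy h ≥ 0, there is exactly one solution arc of energy h joining a to b, and it is increasing; for -U₀/b < h < 0 there are exactly two solution arcs of energy h joining a to b: one increasing from a to b, and one increasing from a to -U₀/h then decreasing to b. -/

import Mathlib

open Set

/-- `IsKeplerArc U₀ h a b τ r` : `r` is a solution arc of the one-dimensional
Kepler problem `r'' = -U₀/r²` of energy `h`, joining `a` to `b` in time `τ > 0`,
positive in the interior. -/
def IsKeplerArc (U₀ h a b τ : ℝ) (r : ℝ → ℝ) : Prop :=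
  0 < τ ∧ r 0 = a ∧ r τ = b ∧ ContinuousOn r (Icc 0 τ) ∧
    ∀ t ∈ Ioo 0 τ, 0 < r t ∧
      deriv (deriv r) t = -U₀ / (r t) ^ 2 ∧
      (deriv r t) ^ 2 / 2 - U₀ / r t = h

noncomputable section
open MeasureTheory Function Filter

namespace KeplerProof


lemma eq_const_of_hasDerivAt_zero {F : ℝ → ℝ} {x y : ℝ} (hxy : x ≤ y)
    (hc : ContinuousOn F (Icc x y)) (hd : ∀ t ∈ Ioo x y, HasDerivAt F 0 t) :
    ∀ u ∈ Icc x y, F u = F x := by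
  have hdiff : DifferentiableOn ℝ F (interior (Icc x y)) := by
    rw [interior_Icc]; exact fun t ht => (hd t ht).differentiableAt.differentiableWithinAt
  have hderiv : ∀ t ∈ interior (Icc x y), deriv F t = 0 := by
    rw [interior_Icc]; exact fun t ht => (hd t ht).deriv
  have h1 := monotoneOn_of_deriv_nonneg (convex_Icc x y) hc hdiff (fun t ht => (hderiv t ht).ge)
  have h2 := antitoneOn_of_deriv_nonpos (convex_Icc x y) hc hdiff (fun t ht => (hderiv t ht).le)
  intro u hu
  have hx : x ∈ Icc x y := left_mem_Icc.2 hxy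
  exact le_antisymm (h2 hx hu hu.1) (h1 hx hu hu.1)

lemma invFunOn_pack {T : ℝ → ℝ} {x y : ℝ} (hxy : x < y)
    (hc : ContinuousOn T (Icc x y)) (hm : StrictMonoOn T (Icc x y)) :
    (∀ ρ ∈ Icc x y, invFunOn T (Icc x y) (T ρ) = ρ) ∧
    (∀ t ∈ Icc (T x) (T y), invFunOn T (Icc x y) t ∈ Icc x y ∧ T (invFunOn T (Icc x y) t) = t) ∧
    StrictMonoOn (invFunOn T (Icc x y)) (Icc (T x) (T y)) ∧
    ContinuousOn (invFunOn T (Icc x y)) (Icc (T x) (T y)) := by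
  set σ := invFunOn T (Icc x y) with hσdef
  have hinj : InjOn T (Icc x y) := hm.injOn
  have hleft : ∀ ρ ∈ Icc x y, σ (T ρ) = ρ := fun ρ hρ => hinj.leftInvOn_invFunOn hρ
  have hsurj : Icc (T x) (T y) ⊆ T '' (Icc x y) := intermediate_value_Icc hxy.le hc
  have hright : ∀ t ∈ Icc (T x) (T y), σ t ∈ Icc x y ∧ T (σ t) = t := by
    intro t ht
    obtain ⟨ρ, hρ, hρt⟩ := hsurj ht
    exact ⟨invFunOn_mem ⟨ρ, hρ, hρt⟩, invFunOn_eq ⟨ρ, hρ, hρt⟩⟩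
  have hmono : StrictMonoOn σ (Icc (T x) (T y)) := by
    intro t ht t' ht' htt'
    by_contra hle
    push_neg at hle
    have h1 := hright t ht; have h2 := hright t' ht'
    have : t' ≤ t := by
      calc t' = T (σ t') := h2.2.symm
        _ ≤ T (σ t) := hm.monotoneOn h2.1 h1.1 hle
        _ = t := h1.2
    exact absurd htt' (not_lt.2 this)
  refine ⟨hleft, hright, hmono, ?_⟩
  intro u hu
  have hσu := hright u hu
  have h_r : ContinuousWithinAt σ (Icc (T x) (T y) ∩ Ici u) u := by
    rcases eq_or_lt_of_le hu.2 with heq | hub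
    · have hsub : Icc (T x) (T y) ∩ Ici u ⊆ {u} := by
        intro z hz; simp only [mem_singleton_iff]
        exact le_antisymm (heq ▸ hz.1.2) hz.2
      exact (continuousWithinAt_singleton).mono hsub
    · have hmono' : StrictMonoOn σ (Icc u (T y)) := hmono.mono (Icc_subset_Icc hu.1 le_rfl)
      have hs : Icc u (T y) ∈ nhdsWithin u (Ici u) :=
        Icc_mem_nhdsGE_of_mem ⟨le_refl u, hub⟩
      have hσu_lt : σ u < y := by
        rcases eq_or_lt_of_le hσu.1.2 with he | hl
        · exfalso
          have : T (σ u) = T y := by rw [he]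
          rw [hσu.2] at this
          exact absurd this (ne_of_lt hub)
        · exact hl
      have hfs : ∀ c > σ u, ∃ d ∈ Icc u (T y), σ d ∈ Ioc (σ u) c := by
        intro c hc
        set ρ := min c y with hρdef
        have hρgt : σ u < ρ := lt_min hc hσu_lt
        have hρmem : ρ ∈ Icc x y := ⟨le_trans hσu.1.1 hρgt.le, min_le_right _ _⟩
        refine ⟨T ρ, ⟨?_, hm.monotoneOn hρmem (right_mem_Icc.2 hxy.le) hρmem.2⟩, ?_⟩
        · calc u = T (σ u) := hσu.2.symm
            _ ≤ T ρ := hm.monotoneOn hσu.1 hρmem hρgt.le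
        · rw [hleft ρ hρmem]
          exact ⟨hρgt, min_le_left _ _⟩
      exact (hmono'.continuousWithinAt_right_of_exists_between hs hfs).mono
        inter_subset_right
  have h_l : ContinuousWithinAt σ (Icc (T x) (T y) ∩ Iic u) u := by
    rcases eq_or_lt_of_le hu.1 with heq | hlb
    · have hsub : Icc (T x) (T y) ∩ Iic u ⊆ {u} := by
        intro z hz; simp only [mem_singleton_iff]
        exact le_antisymm hz.2 (heq ▸ hz.1.1)
      exact (continuousWithinAt_singleton).mono hsub
    · have hmono' : StrictMonoOn σ (Icc (T x) u) := hmono.mono (Icc_subset_Icc le_rfl hu.2)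
      have hs : Icc (T x) u ∈ nhdsWithin u (Iic u) :=
        Icc_mem_nhdsLE_of_mem ⟨hlb, le_refl u⟩
      have hσu_gt : x < σ u := by
        rcases eq_or_lt_of_le hσu.1.1 with he | hl
        · exfalso
          have : T x = T (σ u) := by rw [he]
          rw [hσu.2] at this
          exact absurd this (ne_of_lt hlb)
        · exact hl
      have hfs : ∀ c < σ u, ∃ d ∈ Icc (T x) u, σ d ∈ Ico c (σ u) := by
        intro c hc
        set ρ := max c x with hρdef
        have hρlt : ρ < σ u := max_lt hc hσu_gt
        have hρmem : ρ ∈ Icc x y := ⟨le_max_right _ _, le_trans hρlt.le hσu.1.2⟩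
        refine ⟨T ρ, ⟨hm.monotoneOn (left_mem_Icc.2 hxy.le) hρmem hρmem.1, ?_⟩, ?_⟩
        · calc T ρ ≤ T (σ u) := hm.monotoneOn hρmem hσu.1 hρlt.le
            _ = u := hσu.2
        · rw [hleft ρ hρmem]
          exact ⟨le_max_left _ _, hρlt⟩
      exact (hmono'.continuousWithinAt_left_of_exists_between hs hfs).mono
        inter_subset_right
  refine (h_l.union h_r).mono ?_
  intro z hz
  rcases le_total z u with hzu | hzu
  · exact Or.inl ⟨hz, hzu⟩
  · exact Or.inr ⟨hz, hzu⟩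



def kg (U₀ h : ℝ) : ℝ → ℝ := fun s => Real.sqrt (s / (2*U₀ + 2*h*s))
def kf (U₀ h : ℝ) : ℝ → ℝ := fun ρ => Real.sqrt (2*h + 2*U₀/ρ)
def kT (U₀ h a : ℝ) : ℝ → ℝ := fun ρ => ∫ s in a..ρ, kg U₀ h s

lemma kg_meas (U₀ h : ℝ) : Measurable (kg U₀ h) :=
  Real.continuous_sqrt.measurable.comp
    (measurable_id.div (measurable_const.add (measurable_const.mul measurable_id)))

lemma kg_contAt {U₀ h s : ℝ} (hd : 2*U₀ + 2*h*s ≠ 0) : ContinuousAt (kg U₀ h) s :=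
  Real.continuous_sqrt.continuousAt.comp
    (continuousAt_id.div (continuousAt_const.add (continuousAt_const.mul continuousAt_id)) hd)

lemma kg_pos {U₀ h s : ℝ} (hs : 0 < s) (hd : 0 < 2*U₀ + 2*h*s) : 0 < kg U₀ h s :=
  Real.sqrt_pos.2 (div_pos hs hd)

lemma arg_eq {U₀ h ρ : ℝ} (hρ : ρ ≠ 0) : 2*h + 2*U₀/ρ = (2*U₀ + 2*h*ρ)/ρ := by
  field_simp; ring

lemma kf_sq {U₀ h ρ : ℝ} (hρ : 0 < ρ) (hd : 0 < 2*U₀ + 2*h*ρ) :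
    kf U₀ h ρ ^ 2 = 2*h + 2*U₀/ρ :=
  Real.sq_sqrt (by rw [arg_eq hρ.ne']; positivity)

lemma kf_pos {U₀ h ρ : ℝ} (hρ : 0 < ρ) (hd : 0 < 2*U₀ + 2*h*ρ) : 0 < kf U₀ h ρ :=
  Real.sqrt_pos.2 (by rw [arg_eq hρ.ne']; positivity)

lemma kg_mul_kf {U₀ h ρ : ℝ} (hρ : 0 < ρ) (hd : 0 < 2*U₀ + 2*h*ρ) :
    kg U₀ h ρ * kf U₀ h ρ = 1 := by
  unfold kg kf
  rw [← Real.sqrt_mul (by positivity) _]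
  rw [show ρ / (2*U₀ + 2*h*ρ) * (2*h + 2*U₀/ρ) = 1 by
    rw [arg_eq hρ.ne']; field_simp
    exact div_self (by linarith)]
  exact Real.sqrt_one

lemma kg_inv {U₀ h ρ : ℝ} (hρ : 0 < ρ) (hd : 0 < 2*U₀ + 2*h*ρ) :
    (kg U₀ h ρ)⁻¹ = kf U₀ h ρ :=
  inv_eq_of_mul_eq_one_right (kg_mul_kf hρ hd)

lemma den_pos {U₀ h b s : ℝ} (hU₀ : 0 < U₀) (hbpos : 0 < b) (hb : 0 < 2*U₀ + 2*h*b)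
    (h0 : 0 ≤ s) (hsb : s ≤ b) : 0 < 2*U₀ + 2*h*s := by
  rcases eq_or_lt_of_le h0 with h0' | h0'
  · rw [← h0']; linarith
  · have key : b*(2*U₀+2*h*s) = (b-s)*(2*U₀) + s*(2*U₀+2*h*b) := by ring
    have h1 : 0 ≤ (b-s)*(2*U₀) := mul_nonneg (by linarith) (by linarith)
    have h2 : 0 < s*(2*U₀+2*h*b) := mul_pos h0' hb
    nlinarith

lemma kT_pack {U₀ h a c : ℝ} (hU₀ : 0 < U₀) (ha : 0 ≤ a) (hac : a < c)
    (hden : ∀ s, 0 ≤ s → s < c → 0 < 2*U₀ + 2*h*s)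
    (hint : IntegrableOn (kg U₀ h) (Icc a c) volume) :
    (∀ ρ ∈ Ioo a c, HasDerivAt (kT U₀ h a) (kg U₀ h ρ) ρ) ∧
    ContinuousOn (kT U₀ h a) (Icc a c) ∧
    StrictMonoOn (kT U₀ h a) (Icc a c) ∧ kT U₀ h a a = 0 := by
  have hA : ∀ ρ ∈ Ioo a c, HasDerivAt (kT U₀ h a) (kg U₀ h ρ) ρ := by
    intro ρ hρ
    have hii : IntervalIntegrable (kg U₀ h) volume a ρ := by
      rw [intervalIntegrable_iff_integrableOn_Icc_of_le (le_of_lt hρ.1)]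
      exact hint.mono_set (Icc_subset_Icc le_rfl hρ.2.le)
    exact intervalIntegral.integral_hasDerivAt_right hii
      ⟨univ, univ_mem, (kg_meas U₀ h).aestronglyMeasurable⟩
      (kg_contAt (ne_of_gt (hden ρ (le_trans ha hρ.1.le) hρ.2)))
  have hB : ContinuousOn (kT U₀ h a) (Icc a c) := by
    have := intervalIntegral.continuousOn_primitive_interval
      (f := kg U₀ h) (μ := volume) (a := a) (b := c)
      (by rw [uIcc_of_le hac.le]; exact hint)
    rwa [uIcc_of_le hac.le] at this
  have hC : StrictMonoOn (kT U₀ h a) (Icc a c) := by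
    apply strictMonoOn_of_deriv_pos (convex_Icc a c) hB
    rw [interior_Icc]
    intro ρ hρ
    rw [(hA ρ hρ).deriv]
    exact kg_pos (lt_of_le_of_lt ha hρ.1) (hden ρ (le_trans ha hρ.1.le) hρ.2)
  exact ⟨hA, hB, hC, intervalIntegral.integral_same⟩

variable {U₀ h a b τ : ℝ} {r : ℝ → ℝ}

lemma arc_vdiff (hU₀ : 0 < U₀) (hr : IsKeplerArc U₀ h a b τ r) :
    ∀ t ∈ Ioo 0 τ, DifferentiableAt ℝ (deriv r) t := by
  obtain ⟨hτ, hr0, hrτ, hrc, hi⟩ := hr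
  intro t ht
  have hne : deriv (deriv r) t ≠ 0 := by
    rw [(hi t ht).2.1]
    exact ne_of_lt (div_neg_of_neg_of_pos (neg_lt_zero.2 hU₀) (pow_pos (hi t ht).1 2))
  exact differentiableAt_of_deriv_ne_zero hne

lemma arc_vanti (hU₀ : 0 < U₀) (hr : IsKeplerArc U₀ h a b τ r) :
    StrictAntiOn (deriv r) (Ioo 0 τ) := by
  have hd := arc_vdiff hU₀ hr
  obtain ⟨hτ, hr0, hrτ, hrc, hi⟩ := hr
  apply strictAntiOn_of_deriv_neg (convex_Ioo 0 τ)
  · exact fun t ht => (hd t ht).continuousAt.continuousWithinAt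
  · rw [interior_Ioo]
    intro t ht
    rw [(hi t ht).2.1]
    exact div_neg_of_neg_of_pos (neg_lt_zero.2 hU₀) (pow_pos (hi t ht).1 2)

lemma arc_energy (hr : IsKeplerArc U₀ h a b τ r) :
    ∀ t ∈ Ioo 0 τ, (deriv r t) ^ 2 = 2*h + 2*U₀ / r t := by
  intro t ht
  have he := (hr.2.2.2.2 t ht).2.2
  have haux : 2*U₀ / r t = 2*(U₀ / r t) := by ring
  linarith

lemma arc_trichotomy (hU₀ : 0 < U₀) (hab : a < b) (hr : IsKeplerArc U₀ h a b τ r) :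
    (∀ t ∈ Ioo 0 τ, 0 < deriv r t) ∨
    (h < 0 ∧ ∃ t₀ ∈ Ioo 0 τ, r t₀ = -U₀/h ∧ deriv r t₀ = 0 ∧
      (∀ t ∈ Ioo 0 t₀, 0 < deriv r t) ∧ (∀ t ∈ Ioo t₀ τ, deriv r t < 0)) := by
  have hvdiff := arc_vdiff hU₀ hr
  have hvanti := arc_vanti hU₀ hr
  have henergy := arc_energy hr
  obtain ⟨hτ, hr0, hrτ, hrc, hi⟩ := hr
  have hpos_exists : ∃ s ∈ Ioo 0 τ, 0 < deriv r s := by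
    by_contra hno; push_neg at hno
    by_cases hz : ∃ z ∈ Ioo 0 τ, deriv r z = 0
    · obtain ⟨z, hzmem, hz0⟩ := hz
      have ht : z/2 ∈ Ioo 0 τ := ⟨by linarith [hzmem.1], by linarith [hzmem.1, hzmem.2]⟩
      have h1 : deriv r z < deriv r (z/2) := hvanti ht hzmem (by linarith [hzmem.1])
      have h2 := hno (z/2) ht
      rw [hz0] at h1; linarith
    · push_neg at hz
      have hneg : ∀ s ∈ Ioo 0 τ, deriv r s < 0 := fun s hs =>
        lt_of_le_of_ne (hno s hs) (hz s hs)
      have hanti : StrictAntiOn r (Icc 0 τ) :=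
        strictAntiOn_of_deriv_neg (convex_Icc 0 τ) hrc (by rw [interior_Icc]; exact hneg)
      have := hanti (left_mem_Icc.2 hτ.le) (right_mem_Icc.2 hτ.le) hτ
      rw [hr0, hrτ] at this; linarith
  by_cases hall : ∀ t ∈ Ioo 0 τ, 0 < deriv r t
  · exact Or.inl hall
  · right
    push_neg at hall
    obtain ⟨s₂, hs₂mem, hs₂le⟩ := hall
    obtain ⟨s₁, hs₁mem, hs₁pos⟩ := hpos_exists
    set S : Set ℝ := {t | t ∈ Ioo 0 τ ∧ deriv r t ≤ 0} with hSdef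
    have hs₂S : s₂ ∈ S := ⟨hs₂mem, hs₂le⟩
    have hS_ne : S.Nonempty := ⟨s₂, hs₂S⟩
    have hS_bdd : BddBelow S := ⟨0, fun u hu => hu.1.1.le⟩
    set t₀ := sInf S with ht₀def
    have hs₁_lb : ∀ u ∈ S, s₁ ≤ u := by
      intro u hu
      by_contra hlt; push_neg at hlt
      have := hvanti hu.1 hs₁mem hlt
      linarith [hu.2]
    have ht₀_ge : s₁ ≤ t₀ := le_csInf hS_ne hs₁_lb
    have ht₀_le : t₀ ≤ s₂ := csInf_le hS_bdd hs₂S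
    have ht₀mem : t₀ ∈ Ioo 0 τ := ⟨lt_of_lt_of_le hs₁mem.1 ht₀_ge, lt_of_le_of_lt ht₀_le hs₂mem.2⟩
    have hbefore : ∀ t ∈ Ioo 0 t₀, 0 < deriv r t := by
      intro t ht
      have htmem : t ∈ Ioo 0 τ := ⟨ht.1, lt_trans ht.2 ht₀mem.2⟩
      by_contra hle; push_neg at hle
      have : t₀ ≤ t := csInf_le hS_bdd ⟨htmem, hle⟩
      linarith [ht.2]
    have hafter : ∀ t ∈ Ioo t₀ τ, deriv r t < 0 := by
      intro t ht
      have htmem : t ∈ Ioo 0 τ := ⟨lt_trans ht₀mem.1 ht.1, ht.2⟩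
      obtain ⟨u, huS, hut⟩ := exists_lt_of_csInf_lt hS_ne ht.1
      have := hvanti huS.1 htmem hut
      linarith [huS.2]
    have hv0 : deriv r t₀ = 0 := by
      have hcont : ContinuousAt (deriv r) t₀ := (hvdiff t₀ ht₀mem).continuousAt
      have hle : deriv r t₀ ≤ 0 := by
        have htd : Tendsto (deriv r) (nhdsWithin t₀ (Ioi t₀)) (nhds (deriv r t₀)) :=
          (hcont.continuousWithinAt (s := Ioi t₀)).tendsto
        refine le_of_tendsto htd ?_
        filter_upwards [Ioo_mem_nhdsGT_of_mem (⟨le_refl t₀, ht₀mem.2⟩ : t₀ ∈ Ico t₀ τ)]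
          with u hu
        exact (hafter u hu).le
      have hge : 0 ≤ deriv r t₀ := by
        have htd : Tendsto (deriv r) (nhdsWithin t₀ (Iio t₀)) (nhds (deriv r t₀)) :=
          (hcont.continuousWithinAt (s := Iio t₀)).tendsto
        refine ge_of_tendsto htd ?_
        filter_upwards [Ioo_mem_nhdsLT_of_mem (⟨ht₀mem.1, le_refl t₀⟩ : t₀ ∈ Ioc 0 t₀)]
          with u hu
        exact (hbefore u hu).le
      linarith
    have hrt₀pos : 0 < r t₀ := (hi t₀ ht₀mem).1
    have hen := henergy t₀ ht₀mem
    rw [hv0] at hen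
    norm_num at hen
    have hUr : U₀ / r t₀ > 0 := div_pos hU₀ hrt₀pos
    have haux : 2*U₀ / r t₀ = 2*(U₀ / r t₀) := by ring
    have hh : h < 0 := by linarith
    have hrt₀ : r t₀ = -U₀/h := by
      have h1 : 2*h + 2*U₀ / r t₀ = 0 := by linarith
      have h2 : 2*h * r t₀ + 2*U₀ = 0 := by
        field_simp at h1; linarith
      rw [eq_div_iff (ne_of_lt hh)]
      linarith
    exact ⟨hh, t₀, ht₀mem, hrt₀, hv0, hbefore, hafter⟩


lemma int_M {U₀ h a b : ℝ} (hU₀ : 0 < U₀) (ha : 0 ≤ a) (hab : a < b)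
    (hb : 0 < 2*U₀ + 2*h*b) : IntegrableOn (kg U₀ h) (Icc a b) volume := by
  have hbpos : 0 < b := lt_of_le_of_lt ha hab
  apply ContinuousOn.integrableOn_compact isCompact_Icc
  intro s hs
  exact (kg_contAt (ne_of_gt (den_pos hU₀ hbpos hb (le_trans ha hs.1) hs.2))).continuousWithinAt

lemma arc_char_M (hU₀ : 0 < U₀) (ha : 0 ≤ a) (hab : a < b) (hb : 0 < 2*U₀ + 2*h*b)
    (hr : IsKeplerArc U₀ h a b τ r) (hm : ∀ t ∈ Ioo 0 τ, 0 < deriv r t) :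
    τ = kT U₀ h a b ∧ ∀ t ∈ Icc 0 τ, r t ∈ Icc a b ∧ kT U₀ h a (r t) = t := by
  have henergy := arc_energy hr
  obtain ⟨hτ, hr0, hrτ, hrc, hi⟩ := hr
  have hbpos : 0 < b := lt_of_le_of_lt ha hab
  have hden : ∀ s, 0 ≤ s → s < b → 0 < 2*U₀ + 2*h*s := fun s h0 hsb =>
    den_pos hU₀ hbpos hb h0 hsb.le
  obtain ⟨hTd, hTc, hTm, hTa⟩ := kT_pack hU₀ ha hab hden (int_M hU₀ ha hab hb)
  have hrmono : StrictMonoOn r (Icc 0 τ) :=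
    strictMonoOn_of_deriv_pos (convex_Icc 0 τ) hrc (by rw [interior_Icc]; exact hm)
  have hmem : ∀ t ∈ Icc 0 τ, r t ∈ Icc a b := by
    intro t ht
    constructor
    · rw [← hr0]; exact hrmono.monotoneOn (left_mem_Icc.2 hτ.le) ht ht.1
    · rw [← hrτ]; exact hrmono.monotoneOn ht (right_mem_Icc.2 hτ.le) ht.2
  have hmemo : ∀ t ∈ Ioo 0 τ, r t ∈ Ioo a b := by
    intro t ht
    exact ⟨hr0 ▸ hrmono (left_mem_Icc.2 hτ.le) (mem_Icc_of_Ioo ht) ht.1,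
           hrτ ▸ hrmono (mem_Icc_of_Ioo ht) (right_mem_Icc.2 hτ.le) ht.2⟩
  have hF : ∀ t ∈ Ioo 0 τ, HasDerivAt (fun t => kT U₀ h a (r t) - t) 0 t := by
    intro t ht
    have hrt := hmemo t ht
    have hrtpos : 0 < r t := lt_of_le_of_lt ha hrt.1
    have hdpos : 0 < 2*U₀ + 2*h*(r t) := hden _ hrtpos.le hrt.2
    have hvpos := hm t ht
    have hrd : HasDerivAt r (deriv r t) t :=
      (differentiableAt_of_deriv_ne_zero hvpos.ne').hasDerivAt
    have hchain := (hTd (r t) hrt).comp t hrd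
    have hveq : deriv r t = kf U₀ h (r t) := by
      rw [← Real.sqrt_sq hvpos.le, henergy t ht]; rfl
    have hone : kg U₀ h (r t) * deriv r t = 1 := by
      rw [hveq]; exact kg_mul_kf hrtpos hdpos
    have := hchain.sub (hasDerivAt_id t)
    rw [hone] at this
    rw [sub_self] at this; exact this
  have hFc : ContinuousOn (fun t => kT U₀ h a (r t) - t) (Icc 0 τ) :=
    (hTc.comp hrc hmem).sub continuousOn_id
  have hconst := eq_const_of_hasDerivAt_zero hτ.le hFc hF
  have hchar : ∀ t ∈ Icc 0 τ, kT U₀ h a (r t) = t := by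
    intro t ht
    have h1 := hconst t ht
    rw [hr0, hTa] at h1
    linarith
  constructor
  · have := hchar τ (right_mem_Icc.2 hτ.le); rw [hrτ] at this; exact this.symm
  · exact fun t ht => ⟨hmem t ht, hchar t ht⟩

lemma exists_mono_arc {U₀ h a b : ℝ} (hU₀ : 0 < U₀) (ha : 0 ≤ a) (hab : a < b)
    (hb : 0 < 2*U₀ + 2*h*b) :
    ∃ τ r, IsKeplerArc U₀ h a b τ r ∧ StrictMonoOn r (Icc 0 τ) ∧
      (∀ t ∈ Ioo 0 τ, 0 < deriv r t) := by
  have hbpos : 0 < b := lt_of_le_of_lt ha hab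
  have hden : ∀ s, 0 ≤ s → s < b → 0 < 2*U₀ + 2*h*s := fun s h0 hsb =>
    den_pos hU₀ hbpos hb h0 hsb.le
  obtain ⟨hTd, hTc, hTm, hTa⟩ := kT_pack hU₀ ha hab hden (int_M hU₀ ha hab hb)
  obtain ⟨hleft, hright, hσmono, hσcont⟩ := invFunOn_pack hab hTc hTm
  rw [hTa] at hright hσmono hσcont
  set T := kT U₀ h a with hTdef
  set σ := invFunOn T (Icc a b) with hσdef
  set τ := T b with hτdef
  have hτpos : 0 < τ := by
    rw [hτdef, ← hTa]
    exact hTm (left_mem_Icc.2 hab.le) (right_mem_Icc.2 hab.le) hab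
  have hσ0 : σ 0 = a := by
    have := hleft a (left_mem_Icc.2 hab.le); rwa [hTa] at this
  have hστ : σ τ = b := hleft b (right_mem_Icc.2 hab.le)
  -- key interior facts
  have hkey : ∀ t ∈ Ioo 0 τ, HasDerivAt σ (kf U₀ h (σ t)) t ∧ σ t ∈ Ioo a b := by
    intro t ht
    have htmem : t ∈ Icc 0 τ := mem_Icc_of_Ioo ht
    have h1 := hright t htmem
    have hρlt : σ t < b := by
      rcases eq_or_lt_of_le h1.1.2 with he | hl
      · exfalso
        have : T (σ t) = τ := by rw [he]
        rw [h1.2] at this; exact absurd this (ne_of_lt ht.2)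
      · exact hl
    have hρgt : a < σ t := by
      rcases eq_or_lt_of_le h1.1.1 with he | hl
      · exfalso
        have : T (σ t) = T a := by rw [← he]
        rw [h1.2, hTa] at this; exact absurd this (ne_of_gt ht.1)
      · exact hl
    have hρpos : 0 < σ t := lt_of_le_of_lt ha hρgt
    have hdpos : 0 < 2*U₀ + 2*h*(σ t) := hden _ hρpos.le hρlt
    have hgpos : 0 < kg U₀ h (σ t) := kg_pos hρpos hdpos
    have hflocal : ∀ᶠ u in nhds t, T (σ u) = u := by
      filter_upwards [Ioo_mem_nhds ht.1 ht.2] with u hu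
      exact (hright u (mem_Icc_of_Ioo hu)).2
    have hσd : HasDerivAt σ (kg U₀ h (σ t))⁻¹ t :=
      HasDerivAt.of_local_left_inverse (hσcont.continuousAt (Icc_mem_nhds ht.1 ht.2))
        (hTd (σ t) ⟨hρgt, hρlt⟩) hgpos.ne' hflocal
    rw [kg_inv hρpos hdpos] at hσd
    exact ⟨hσd, hρgt, hρlt⟩
  have hderiv_eq : ∀ t ∈ Ioo 0 τ, deriv σ t = kf U₀ h (σ t) :=
    fun t ht => ((hkey t ht).1).deriv
  have hderiv_pos : ∀ t ∈ Ioo 0 τ, 0 < deriv σ t := by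
    intro t ht
    obtain ⟨hd, hmem⟩ := hkey t ht
    have hρpos : 0 < σ t := lt_of_le_of_lt ha hmem.1
    rw [hderiv_eq t ht]
    exact kf_pos hρpos (hden _ hρpos.le hmem.2)
  refine ⟨τ, σ, ⟨hτpos, hσ0, hστ, hσcont, ?_⟩, hσmono, hderiv_pos⟩
  intro t ht
  obtain ⟨hσd, hmem⟩ := hkey t ht
  have hρpos : 0 < σ t := lt_of_le_of_lt ha hmem.1
  have hdpos : 0 < 2*U₀ + 2*h*(σ t) := hden _ hρpos.le hmem.2
  have hfρpos : 0 < kf U₀ h (σ t) := kf_pos hρpos hdpos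
  have harg : 0 < 2*h + 2*U₀/(σ t) := by rw [arg_eq hρpos.ne']; positivity
  refine ⟨hρpos, ?_, ?_⟩
  · -- second derivative
    have hev : deriv σ =ᶠ[nhds t] (fun u => kf U₀ h (σ u)) := by
      filter_upwards [Ioo_mem_nhds ht.1 ht.2] with u hu
      exact hderiv_eq u hu
    have hfun : (fun u => kf U₀ h (σ u)) = (fun u => Real.sqrt (2*h + 2*U₀*(σ u)⁻¹)) := by
      funext u; simp [kf, div_eq_mul_inv]
    have hinner : HasDerivAt (fun u => 2*h + 2*U₀*(σ u)⁻¹)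
        (2*U₀*(-((σ t)^2)⁻¹ * kf U₀ h (σ t))) t := by
      have h1 : HasDerivAt (fun u => (σ u)⁻¹) (-((σ t)^2)⁻¹ * kf U₀ h (σ t)) t :=
        (hasDerivAt_inv hρpos.ne').comp t hσd
      have h2 := (h1.const_mul (2*U₀)).const_add (2*h)
      convert h2 using 1 <;> ring
    have hargne : 2*h + 2*U₀*(σ t)⁻¹ ≠ 0 := by
      rw [← div_eq_mul_inv]; exact harg.ne'
    have houter := hinner.sqrt hargne
    have hsqrt_eq : Real.sqrt (2*h + 2*U₀*(σ t)⁻¹) = kf U₀ h (σ t) := by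
      simp [kf, div_eq_mul_inv]
    rw [hev.deriv_eq, hfun, houter.deriv, hsqrt_eq]
    field_simp
  · -- energy
    rw [hderiv_eq t ht, kf_sq hρpos hdpos]
    have haux : 2*U₀/(σ t) = 2*(U₀/(σ t)) := by ring
    linarith

lemma int_UD {U₀ h a : ℝ} (hU₀ : 0 < U₀) (ha : 0 ≤ a) (hh : h < 0) (ham : a < -U₀/h) :
    IntegrableOn (kg U₀ h) (Icc a (-U₀/h)) volume := by
  set m := -U₀/h with hmdef
  have hmpos : 0 < m := lt_of_le_of_lt ha ham
  have h2h : 0 < -2*h := by linarith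
  have hKarg : 0 ≤ m/(-2*h) := by positivity
  set K := Real.sqrt (m/(-2*h)) with hKdef
  have hKnn : 0 ≤ K := Real.sqrt_nonneg _
  have hhm : h * m = -U₀ := by
    rw [hmdef]; field_simp
    rw [div_self hh.ne]
  clear_value m
  have hker : ∀ s : ℝ, 2*U₀ + 2*h*s = (-2*h)*(m - s) := by
    intro s; linear_combination (2:ℝ) * hhm
  have hmaj : IntervalIntegrable (fun s => K * (m - s) ^ (-(1/2):ℝ)) volume a m := by
    have h1 : IntervalIntegrable (fun x : ℝ => x ^ (-(1/2):ℝ)) volume (m - a) (m - m) :=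
      intervalIntegral.intervalIntegrable_rpow' (by norm_num)
    have h2 := (h1.comp_sub_left m).const_mul K
    rw [show m - (m - a) = a from by ring, show m - (m - m) = m from by ring] at h2
    exact h2
  rw [← intervalIntegrable_iff_integrableOn_Icc_of_le ham.le]
  apply hmaj.mono_fun ((kg_meas U₀ h).aestronglyMeasurable)
  rw [uIoc_of_le ham.le]
  refine (ae_restrict_iff' measurableSet_Ioc).2 (Filter.Eventually.of_forall ?_)
  intro s hs
  have hspos : 0 < s := lt_of_le_of_lt ha hs.1
  rcases lt_or_eq_of_le hs.2 with hsm | hsm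
  · have hpos : 0 < m - s := sub_pos.2 hsm
    have e1 : kg U₀ h s = Real.sqrt (s/(-2*h)) * Real.sqrt ((m - s)⁻¹) := by
      unfold kg
      rw [hker s, ← Real.sqrt_mul (by positivity : (0:ℝ) ≤ s/(-2*h))]
      congr 1
      rw [div_mul_eq_div_div, div_eq_mul_inv]
    have e2 : Real.sqrt ((m - s)⁻¹) = (m - s) ^ (-(1/2):ℝ) := by
      rw [Real.sqrt_inv, Real.sqrt_eq_rpow, ← Real.rpow_neg hpos.le]
    have e3 : Real.sqrt (s/(-2*h)) ≤ K := by
      rw [hKdef]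
      exact Real.sqrt_le_sqrt ((div_le_div_iff_of_pos_right h2h).2 hs.2)
    have hrnn : (0:ℝ) ≤ (m - s) ^ (-(1/2):ℝ) := Real.rpow_nonneg hpos.le _
    show ‖kg U₀ h s‖ ≤ ‖K * (m - s) ^ (-(1/2):ℝ)‖
    rw [Real.norm_eq_abs, Real.norm_eq_abs, e1, e2,
      abs_of_nonneg (mul_nonneg (Real.sqrt_nonneg _) hrnn),
      abs_of_nonneg (mul_nonneg hKnn hrnn)]
    exact mul_le_mul_of_nonneg_right e3 hrnn
  · have hms : m - s = 0 := by rw [hsm]; ring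
    have hz : 2*U₀ + 2*h*s = 0 := by rw [hker s, hms, mul_zero]
    have hkgz : kg U₀ h s = 0 := by unfold kg; rw [hz, div_zero, Real.sqrt_zero]
    show ‖kg U₀ h s‖ ≤ ‖K * (m - s) ^ (-(1/2):ℝ)‖
    rw [hkgz, hms, Real.zero_rpow (by norm_num : (-(1/2):ℝ) ≠ 0), mul_zero]

lemma hm_eq {U₀ h : ℝ} (hh : h < 0) : h * (-U₀/h) = -U₀ := by
  field_simp
  rw [mul_comm h U₀, mul_div_assoc, div_self hh.ne, mul_one]

lemma den_pos_lt_m {U₀ h s : ℝ} (hh : h < 0) (hs : s < -U₀/h) : 0 < 2*U₀ + 2*h*s := by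
  have h1 : h * (-U₀/h) < h * s := mul_lt_mul_of_neg_left hs hh
  rw [hm_eq hh] at h1
  linarith

lemma arc_char_UD (hU₀ : 0 < U₀) (ha : 0 ≤ a) (hab : a < b) (hh : h < 0)
    (hbm : b < -U₀/h) (hr : IsKeplerArc U₀ h a b τ r) {t₀ : ℝ}
    (ht₀ : t₀ ∈ Ioo 0 τ) (hz : deriv r t₀ = 0)
    (hp : ∀ t ∈ Ioo 0 t₀, 0 < deriv r t) (hn : ∀ t ∈ Ioo t₀ τ, deriv r t < 0) :
    t₀ = kT U₀ h a (-U₀/h) ∧ τ = 2 * kT U₀ h a (-U₀/h) - kT U₀ h a b ∧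
    (∀ t ∈ Icc 0 t₀, r t ∈ Icc a (-U₀/h) ∧ kT U₀ h a (r t) = t) ∧
    (∀ t ∈ Icc t₀ τ, r t ∈ Icc a (-U₀/h) ∧ kT U₀ h a (r t) = 2*t₀ - t) := by
  have henergy := arc_energy hr
  obtain ⟨hτ, hr0, hrτ, hrc, hi⟩ := hr
  have ham : a < -U₀/h := lt_trans hab hbm
  have hden : ∀ s, 0 ≤ s → s < -U₀/h → 0 < 2*U₀ + 2*h*s := fun s _ hs =>
    den_pos_lt_m hh hs
  obtain ⟨hTd, hTc, hTm, hTa⟩ := kT_pack hU₀ ha ham hden (int_UD hU₀ ha hh ham)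
  -- r t₀ = -U₀/h
  have ht₀τ : t₀ ∈ Ioo 0 τ := ht₀
  have hrt₀pos : 0 < r t₀ := (hi t₀ ht₀τ).1
  have hrt₀ : r t₀ = -U₀/h := by
    have hen := henergy t₀ ht₀τ
    rw [hz] at hen
    norm_num at hen
    have h2 : 2*h * r t₀ + 2*U₀ = 0 := by
      have h1 : 2*h + 2*U₀ / r t₀ = 0 := by linarith
      field_simp at h1; linarith
    rw [eq_div_iff hh.ne]
    linarith
  -- piece 1 : [0, t₀]
  have hsub1 : Icc (0:ℝ) t₀ ⊆ Icc 0 τ := Icc_subset_Icc le_rfl ht₀.2.le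
  have hmono1 : StrictMonoOn r (Icc 0 t₀) :=
    strictMonoOn_of_deriv_pos (convex_Icc 0 t₀) (hrc.mono hsub1) (by rw [interior_Icc]; exact hp)
  have hmem1 : ∀ t ∈ Icc 0 t₀, r t ∈ Icc a (-U₀/h) := by
    intro t ht
    constructor
    · rw [← hr0]; exact hmono1.monotoneOn (left_mem_Icc.2 ht₀.1.le) ht ht.1
    · rw [← hrt₀]; exact hmono1.monotoneOn ht (right_mem_Icc.2 ht₀.1.le) ht.2
  have hmemo1 : ∀ t ∈ Ioo 0 t₀, r t ∈ Ioo a (-U₀/h) := by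
    intro t ht
    exact ⟨hr0 ▸ hmono1 (left_mem_Icc.2 ht₀.1.le) (mem_Icc_of_Ioo ht) ht.1,
           hrt₀ ▸ hmono1 (mem_Icc_of_Ioo ht) (right_mem_Icc.2 ht₀.1.le) ht.2⟩
  have hF1 : ∀ t ∈ Ioo 0 t₀, HasDerivAt (fun t => kT U₀ h a (r t) - t) 0 t := by
    intro t ht
    have htτ : t ∈ Ioo 0 τ := ⟨ht.1, lt_trans ht.2 ht₀.2⟩
    have hrt := hmemo1 t ht
    have hrtpos : 0 < r t := lt_of_le_of_lt ha hrt.1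
    have hdpos : 0 < 2*U₀ + 2*h*(r t) := den_pos_lt_m hh hrt.2
    have hvpos := hp t ht
    have hrd : HasDerivAt r (deriv r t) t :=
      (differentiableAt_of_deriv_ne_zero hvpos.ne').hasDerivAt
    have hchain := (hTd (r t) hrt).comp t hrd
    have hveq : deriv r t = kf U₀ h (r t) := by
      rw [← Real.sqrt_sq hvpos.le, henergy t htτ]; rfl
    have hone : kg U₀ h (r t) * deriv r t = 1 := by
      rw [hveq]; exact kg_mul_kf hrtpos hdpos
    have := hchain.sub (hasDerivAt_id t)
    rw [hone] at this
    rw [sub_self] at this; exact this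
  have hFc1 : ContinuousOn (fun t => kT U₀ h a (r t) - t) (Icc 0 t₀) :=
    (hTc.comp (hrc.mono hsub1) hmem1).sub continuousOn_id
  have hconst1 := eq_const_of_hasDerivAt_zero ht₀.1.le hFc1 hF1
  have hchar1 : ∀ t ∈ Icc 0 t₀, kT U₀ h a (r t) = t := by
    intro t ht
    have h1 := hconst1 t ht
    rw [hr0, hTa] at h1
    linarith
  have hTt₀ : kT U₀ h a (-U₀/h) = t₀ := by
    have := hchar1 t₀ (right_mem_Icc.2 ht₀.1.le)
    rwa [hrt₀] at this
  -- piece 2 : [t₀, τ]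
  have hsub2 : Icc t₀ τ ⊆ Icc 0 τ := Icc_subset_Icc ht₀.1.le le_rfl
  have hanti : StrictAntiOn r (Icc t₀ τ) :=
    strictAntiOn_of_deriv_neg (convex_Icc t₀ τ) (hrc.mono hsub2) (by rw [interior_Icc]; exact hn)
  have hmem2 : ∀ t ∈ Icc t₀ τ, r t ∈ Icc a (-U₀/h) := by
    intro t ht
    constructor
    · have : b ≤ r t := by
        rw [← hrτ]; exact (hanti.antitoneOn ht (right_mem_Icc.2 ht₀.2.le) ht.2)
      linarith
    · rw [← hrt₀]; exact hanti.antitoneOn (left_mem_Icc.2 ht₀.2.le) ht ht.1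
  have hmemo2 : ∀ t ∈ Ioo t₀ τ, r t ∈ Ioo a (-U₀/h) := by
    intro t ht
    constructor
    · have : b < r t := hrτ ▸ hanti (mem_Icc_of_Ioo ht) (right_mem_Icc.2 ht₀.2.le) ht.2
      linarith
    · exact hrt₀ ▸ hanti (left_mem_Icc.2 ht₀.2.le) (mem_Icc_of_Ioo ht) ht.1
  have hF2 : ∀ t ∈ Ioo t₀ τ, HasDerivAt (fun t => kT U₀ h a (r t) + t) 0 t := by
    intro t ht
    have htτ : t ∈ Ioo 0 τ := ⟨lt_trans ht₀.1 ht.1, ht.2⟩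
    have hrt := hmemo2 t ht
    have hrtpos : 0 < r t := lt_of_le_of_lt ha hrt.1
    have hdpos : 0 < 2*U₀ + 2*h*(r t) := den_pos_lt_m hh hrt.2
    have hvneg := hn t ht
    have hrd : HasDerivAt r (deriv r t) t :=
      (differentiableAt_of_deriv_ne_zero hvneg.ne).hasDerivAt
    have hchain := (hTd (r t) hrt).comp t hrd
    have hveq : deriv r t = -kf U₀ h (r t) := by
      have h1 : kf U₀ h (r t) = -deriv r t := by
        show Real.sqrt _ = _
        rw [← henergy t htτ, show (deriv r t)^2 = (-deriv r t)^2 from by ring,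
          Real.sqrt_sq (by linarith)]
      rw [h1]; ring
    have hone : kg U₀ h (r t) * deriv r t = -1 := by
      rw [hveq]
      have := kg_mul_kf hrtpos hdpos
      linarith [this]
    have := hchain.add (hasDerivAt_id t)
    rw [hone] at this
    rw [neg_add_cancel] at this; exact this
  have hFc2 : ContinuousOn (fun t => kT U₀ h a (r t) + t) (Icc t₀ τ) :=
    (hTc.comp (hrc.mono hsub2) hmem2).add continuousOn_id
  have hconst2 := eq_const_of_hasDerivAt_zero ht₀.2.le hFc2 hF2
  have hchar2 : ∀ t ∈ Icc t₀ τ, kT U₀ h a (r t) = 2*t₀ - t := by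
    intro t ht
    have h1 := hconst2 t ht
    rw [hrt₀, hTt₀] at h1
    linarith
  have hτeq : τ = 2 * kT U₀ h a (-U₀/h) - kT U₀ h a b := by
    have := hchar2 τ (right_mem_Icc.2 ht₀.2.le)
    rw [hrτ] at this
    rw [hTt₀]
    linarith
  exact ⟨hTt₀.symm, hτeq, fun t ht => ⟨hmem1 t ht, hchar1 t ht⟩,
    fun t ht => ⟨hmem2 t ht, hchar2 t ht⟩⟩

lemma exists_ud_arc {U₀ h a b : ℝ} (hU₀ : 0 < U₀) (ha : 0 ≤ a) (hab : a < b)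
    (hh : h < 0) (hbm : b < -U₀/h) :
    ∃ τ₂ r₂ t₀, IsKeplerArc U₀ h a b τ₂ r₂ ∧ t₀ ∈ Ioo 0 τ₂ ∧ r₂ t₀ = -U₀/h ∧
      StrictMonoOn r₂ (Icc 0 t₀) ∧ StrictAntiOn r₂ (Icc t₀ τ₂) ∧
      deriv r₂ t₀ = 0 ∧ (∀ t ∈ Ioo 0 t₀, 0 < deriv r₂ t) ∧
      (∀ t ∈ Ioo t₀ τ₂, deriv r₂ t < 0) := by
  have hπ := Real.pi_pos
  set p : ℝ := -U₀/(2*h) with hpdef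
  have hp : 0 < p := div_pos_iff.2 (Or.inr ⟨by linarith, by linarith⟩)
  have hp2h : (2*h)*p = -U₀ := hm_eq (by linarith : 2*h < 0)
  have hm2p : -U₀/h = 2*p := by
    rw [div_eq_iff hh.ne]
    linarith [hp2h]
  rw [hm2p] at hbm
  have hb2p : b < 2*p := hbm
  have ha2p : a < 2*p := lt_trans hab hb2p
  have hbpos : 0 < b := lt_of_le_of_lt ha hab
  set q : ℝ := Real.sqrt (p^3/U₀) with hqdef
  have hq : 0 < q := Real.sqrt_pos.2 (by positivity)
  have hq2 : q^2 * U₀ = p^3 := by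
    rw [hqdef, Real.sq_sqrt (by positivity)]; field_simp
  clear_value p q
  -- anomalies
  have hamem : (1 - a/p) ∈ Icc (-1:ℝ) 1 := by
    constructor
    · have : a/p < 2 := by rw [div_lt_iff₀ hp]; linarith
      linarith
    · have : 0 ≤ a/p := by positivity
      linarith
  have hbmem : (1 - b/p) ∈ Icc (-1:ℝ) 1 := by
    constructor
    · have : b/p < 2 := by rw [div_lt_iff₀ hp]; linarith
      linarith
    · have : 0 ≤ b/p := by positivity
      linarith
  set Ea : ℝ := Real.arccos (1 - a/p) with hEadef
  set Eb : ℝ := Real.arccos (1 - b/p) with hEbdef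
  have cosEa : Real.cos Ea = 1 - a/p := Real.cos_arccos hamem.1 hamem.2
  have cosEb : Real.cos Eb = 1 - b/p := Real.cos_arccos hbmem.1 hbmem.2
  have hEa0 : 0 ≤ Ea := Real.arccos_nonneg _
  have hEb0 : 0 < Eb := Real.arccos_pos.2 (by
    have : 0 < b/p := by positivity
    linarith)
  have hEab : Ea < Eb := by
    apply Real.strictAntiOn_arccos hbmem hamem
    have : a/p < b/p := (div_lt_div_iff_of_pos_right hp).2 hab
    linarith
  have hEbπ : Eb < Real.pi := by
    rcases lt_or_eq_of_le (Real.arccos_le_pi (1 - b/p)) with hlt | heq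
    · exact hlt
    · exfalso
      have : Real.cos Eb = -1 := by rw [hEbdef, heq, Real.cos_pi]
      rw [cosEb] at this
      have hb2 : b = 2*p := by
        have : b/p = 2 := by linarith
        rw [← this]; field_simp
      linarith
  have hEaπ : Ea < Real.pi := lt_trans hEab hEbπ
  -- the Kepler-equation time function
  set Φ : ℝ → ℝ := fun E => q*(E - Real.sin E) - q*(Ea - Real.sin Ea) with hΦdef
  have hΦd : ∀ E : ℝ, HasDerivAt Φ (q*(1 - Real.cos E)) E := by
    intro E
    have h1 : HasDerivAt (fun E : ℝ => E - Real.sin E) (1 - Real.cos E) E :=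
      (hasDerivAt_id E).sub (Real.hasDerivAt_sin E)
    exact (h1.const_mul q).sub_const _
  have hΦc : Continuous Φ := by
    apply Continuous.sub _ continuous_const
    exact continuous_const.mul (continuous_id.sub Real.continuous_sin)
  have hcos_lt : ∀ E ∈ Ioo (0:ℝ) (2*Real.pi), Real.cos E < 1 := by
    intro E hE
    rcases lt_or_eq_of_le (Real.cos_le_one E) with hlt | heq
    · exact hlt
    · exfalso
      obtain ⟨n, hn⟩ := (Real.cos_eq_one_iff E).1 heq
      have h0 : (0:ℝ) < (n:ℝ) * (2*Real.pi) := hn ▸ hE.1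
      have h2 : (n:ℝ) * (2*Real.pi) < 2*Real.pi := hn ▸ hE.2
      have hnpos : (0:ℝ) < (n:ℝ) := by
        by_contra hc; push_neg at hc
        nlinarith
      have hn1 : (n:ℝ) < 1 := by nlinarith
      have : (0:ℤ) < n := by exact_mod_cast hnpos
      have : (1:ℤ) ≤ n := this
      have : (1:ℝ) ≤ (n:ℝ) := by exact_mod_cast this
      linarith
  have hΦmono : StrictMonoOn Φ (Icc 0 (2*Real.pi)) := by
    apply strictMonoOn_of_deriv_pos (convex_Icc _ _) hΦc.continuousOn
    rw [interior_Icc]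
    intro E hE
    rw [(hΦd E).deriv]
    exact mul_pos hq (by linarith [hcos_lt E hE])
  obtain ⟨hleft, hright, hσmono, hσcont⟩ :=
    invFunOn_pack (by positivity : (0:ℝ) < 2*Real.pi) hΦc.continuousOn hΦmono
  set Θ : ℝ → ℝ := invFunOn Φ (Icc 0 (2*Real.pi)) with hΘdef
  have hEa_mem : Ea ∈ Icc (0:ℝ) (2*Real.pi) := ⟨hEa0, by linarith⟩
  have hπ_mem : Real.pi ∈ Icc (0:ℝ) (2*Real.pi) := ⟨hπ.le, by linarith⟩
  have hEb'_mem : 2*Real.pi - Eb ∈ Icc (0:ℝ) (2*Real.pi) := ⟨by linarith, by linarith⟩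
  set t₀ : ℝ := Φ Real.pi with ht₀def
  set τ₂ : ℝ := Φ (2*Real.pi - Eb) with hτ₂def
  have hΦEa : Φ Ea = 0 := by rw [hΦdef]; ring
  have ht₀pos : 0 < t₀ := by
    rw [← hΦEa]; exact hΦmono hEa_mem hπ_mem hEaπ
  have ht₀τ : t₀ < τ₂ := hΦmono hπ_mem hEb'_mem (by linarith)
  have hτ₂pos : 0 < τ₂ := lt_trans ht₀pos ht₀τ
  have h0_mem : (0:ℝ) ∈ Icc (0:ℝ) (2*Real.pi) := ⟨le_rfl, by linarith⟩
  have h2π_mem : 2*Real.pi ∈ Icc (0:ℝ) (2*Real.pi) := ⟨by linarith, le_rfl⟩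
  have hΦ0le : Φ 0 ≤ 0 := by
    calc Φ 0 ≤ Φ Ea := hΦmono.monotoneOn h0_mem hEa_mem hEa0
      _ = 0 := hΦEa
  have hτ₂le : τ₂ ≤ Φ (2*Real.pi) := by
    exact hΦmono.monotoneOn hEb'_mem h2π_mem (by linarith)
  have hIccsub : Icc (0:ℝ) τ₂ ⊆ Icc (Φ 0) (Φ (2*Real.pi)) :=
    Icc_subset_Icc hΦ0le hτ₂le
  set r₂ : ℝ → ℝ := fun t => p * (1 - Real.cos (Θ t)) with hr₂def
  -- values at special points
  have hΘ0 : Θ 0 = Ea := by rw [← hΦEa]; exact hleft Ea hEa_mem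
  have hΘt₀ : Θ t₀ = Real.pi := hleft Real.pi hπ_mem
  have hΘτ₂ : Θ τ₂ = 2*Real.pi - Eb := hleft _ hEb'_mem
  have hr₂0 : r₂ 0 = a := by
    rw [hr₂def]; simp only; rw [hΘ0, cosEa]
    field_simp
    ring
  have hr₂τ : r₂ τ₂ = b := by
    rw [hr₂def]; simp only; rw [hΘτ₂, Real.cos_two_pi_sub, cosEb]
    field_simp
    ring
  have hr₂t₀ : r₂ t₀ = -U₀/h := by
    rw [hr₂def]; simp only; rw [hΘt₀, Real.cos_pi, hm2p]
    ring
  have hr₂c : ContinuousOn r₂ (Icc 0 τ₂) := by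
    apply (continuous_const.mul (continuous_const.sub Real.continuous_cos)).comp_continuousOn
    exact hσcont.mono hIccsub
  -- interior analysis
  have hΘmem : ∀ t ∈ Ioo 0 τ₂, Θ t ∈ Ioo Ea (2*Real.pi - Eb) ∧
      Θ t ∈ Icc 0 (2*Real.pi) ∧ Φ (Θ t) = t := by
    intro t ht
    have h1 := hright t (hIccsub (mem_Icc_of_Ioo ht))
    refine ⟨⟨?_, ?_⟩, h1.1, h1.2⟩
    · by_contra hc; push_neg at hc
      have : Φ (Θ t) ≤ Φ Ea := hΦmono.monotoneOn h1.1 hEa_mem hc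
      rw [h1.2, hΦEa] at this
      linarith [ht.1]
    · by_contra hc; push_neg at hc
      have : Φ (2*Real.pi - Eb) ≤ Φ (Θ t) := hΦmono.monotoneOn hEb'_mem h1.1 hc
      rw [h1.2] at this
      linarith [ht.2]
  have hΘrange : ∀ t ∈ Ioo 0 τ₂, Θ t ∈ Ioo (0:ℝ) (2*Real.pi) := by
    intro t ht
    obtain ⟨h1, _, _⟩ := hΘmem t ht
    exact ⟨lt_of_le_of_lt hEa0 h1.1, by linarith [h1.2, hEb0]⟩
  have hCpos : ∀ t ∈ Ioo 0 τ₂, 0 < 1 - Real.cos (Θ t) := by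
    intro t ht
    linarith [hcos_lt (Θ t) (hΘrange t ht)]
  have hr₂pos : ∀ t ∈ Ioo 0 τ₂, 0 < r₂ t := by
    intro t ht
    exact mul_pos hp (hCpos t ht)
  have hΘd : ∀ t ∈ Ioo 0 τ₂, HasDerivAt Θ (q*(1 - Real.cos (Θ t)))⁻¹ t := by
    intro t ht
    have hne : q*(1 - Real.cos (Θ t)) ≠ 0 := (mul_pos hq (hCpos t ht)).ne'
    apply HasDerivAt.of_local_left_inverse
      (hσcont.continuousAt (Icc_mem_nhds (lt_of_le_of_lt hΦ0le ht.1) (lt_of_lt_of_le ht.2 hτ₂le)))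
      (hΦd (Θ t)) hne
    filter_upwards [Ioo_mem_nhds ht.1 ht.2] with u hu
    exact (hright u (hIccsub (mem_Icc_of_Ioo hu))).2
  have hr₂d : ∀ t ∈ Ioo 0 τ₂,
      HasDerivAt r₂ (p * Real.sin (Θ t) * (q*(1 - Real.cos (Θ t)))⁻¹) t := by
    intro t ht
    have houter : HasDerivAt (fun E => p * (1 - Real.cos E)) (p * Real.sin (Θ t)) (Θ t) := by
      have h1 := (Real.hasDerivAt_cos (Θ t)).const_sub (1:ℝ)
      have h2 := h1.const_mul p
      simpa using h2
    exact houter.comp t (hΘd t ht)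
  have hderiv_eq : ∀ t ∈ Ioo 0 τ₂,
      deriv r₂ t = p * Real.sin (Θ t) * (q*(1 - Real.cos (Θ t)))⁻¹ :=
    fun t ht => (hr₂d t ht).deriv
  -- signs
  have hsin_pos : ∀ t ∈ Ioo 0 t₀, 0 < Real.sin (Θ t) := by
    intro t ht
    have htτ : t ∈ Ioo 0 τ₂ := ⟨ht.1, lt_trans ht.2 ht₀τ⟩
    obtain ⟨h1, h2, h3⟩ := hΘmem t htτ
    have hlt : Θ t < Real.pi := by
      by_contra hc; push_neg at hc
      have : Φ Real.pi ≤ Φ (Θ t) := hΦmono.monotoneOn hπ_mem h2 hc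
      rw [h3] at this
      linarith [ht.2]
    exact Real.sin_pos_of_pos_of_lt_pi (lt_of_le_of_lt hEa0 h1.1) hlt
  have hsin_neg : ∀ t ∈ Ioo t₀ τ₂, Real.sin (Θ t) < 0 := by
    intro t ht
    have htτ : t ∈ Ioo 0 τ₂ := ⟨lt_trans ht₀pos ht.1, ht.2⟩
    obtain ⟨h1, h2, h3⟩ := hΘmem t htτ
    have hgt : Real.pi < Θ t := by
      by_contra hc; push_neg at hc
      have : Φ (Θ t) ≤ Φ Real.pi := hΦmono.monotoneOn h2 hπ_mem hc
      rw [h3] at this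
      linarith [ht.1]
    have h4 : Real.sin (Θ t) = -Real.sin (Θ t - Real.pi) := by
      rw [show Θ t = (Θ t - Real.pi) + Real.pi from by ring, Real.sin_add_pi]
      ring_nf
    rw [h4, neg_lt_zero]
    apply Real.sin_pos_of_pos_of_lt_pi (by linarith)
    have := h1.2
    linarith [hEb0]
  have hdpos : ∀ t ∈ Ioo 0 t₀, 0 < deriv r₂ t := by
    intro t ht
    have htτ : t ∈ Ioo 0 τ₂ := ⟨ht.1, lt_trans ht.2 ht₀τ⟩
    rw [hderiv_eq t htτ]
    exact mul_pos (mul_pos hp (hsin_pos t ht)) (inv_pos.2 (mul_pos hq (hCpos t htτ)))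
  have hdneg : ∀ t ∈ Ioo t₀ τ₂, deriv r₂ t < 0 := by
    intro t ht
    have htτ : t ∈ Ioo 0 τ₂ := ⟨lt_trans ht₀pos ht.1, ht.2⟩
    rw [hderiv_eq t htτ]
    exact mul_neg_of_neg_of_pos (mul_neg_of_pos_of_neg hp (hsin_neg t ht))
      (inv_pos.2 (mul_pos hq (hCpos t htτ)))
  have hd0 : deriv r₂ t₀ = 0 := by
    rw [hderiv_eq t₀ ⟨ht₀pos, ht₀τ⟩, hΘt₀, Real.sin_pi]
    ring
  have hmono : StrictMonoOn r₂ (Icc 0 t₀) := by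
    apply strictMonoOn_of_deriv_pos (convex_Icc _ _)
      (hr₂c.mono (Icc_subset_Icc le_rfl ht₀τ.le))
    rw [interior_Icc]; exact hdpos
  have hanti : StrictAntiOn r₂ (Icc t₀ τ₂) := by
    apply strictAntiOn_of_deriv_neg (convex_Icc _ _)
      (hr₂c.mono (Icc_subset_Icc ht₀pos.le le_rfl))
    rw [interior_Icc]; exact hdneg
  refine ⟨τ₂, r₂, t₀, ⟨hτ₂pos, hr₂0, hr₂τ, hr₂c, ?_⟩, ⟨ht₀pos, ht₀τ⟩, hr₂t₀,
    hmono, hanti, hd0, hdpos, hdneg⟩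
  intro t ht
  set E := Θ t with hEdef
  have hC := hCpos t ht
  have hrpos := hr₂pos t ht
  have hsc := Real.sin_sq_add_cos_sq E
  have hqC : q * (1 - Real.cos E) ≠ 0 := (mul_pos hq hC).ne'
  refine ⟨hrpos, ?_, ?_⟩
  · -- second derivative
    have hev : deriv r₂ =ᶠ[nhds t] (fun u => p * Real.sin (Θ u) / (q*(1 - Real.cos (Θ u)))) := by
      filter_upwards [Ioo_mem_nhds ht.1 ht.2] with u hu
      rw [hderiv_eq u hu, div_eq_mul_inv]
    have hnum : HasDerivAt (fun F => p * Real.sin F) (p * Real.cos E) E :=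
      (Real.hasDerivAt_sin E).const_mul p
    have hden' : HasDerivAt (fun F => q * (1 - Real.cos F)) (q * Real.sin E) E := by
      have h1 := ((Real.hasDerivAt_cos E).const_sub (1:ℝ)).const_mul q
      simpa using h1
    have hdiv := hnum.div hden' hqC
    have hVd : HasDerivAt (fun u => p * Real.sin (Θ u) / (q * (1 - Real.cos (Θ u))))
        ((p * Real.cos E * (q * (1 - Real.cos E)) - p * Real.sin E * (q * Real.sin E)) /
          (q * (1 - Real.cos E)) ^ 2 * (q * (1 - Real.cos E))⁻¹) t := by have := hdiv.comp t (hΘd t ht); exact this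
    rw [hev.deriv_eq, hVd.deriv]
    have hr₂t : r₂ t = p * (1 - Real.cos E) := rfl
    rw [hr₂t]
    have h1 : p * Real.cos E * (q * (1 - Real.cos E)) - p * Real.sin E * (q * Real.sin E)
        = -(p*q*(1 - Real.cos E)) := by
      linear_combination (-(p*q)) * hsc
    have hXpos : 0 < q * (1 - Real.cos E) := mul_pos hq hC
    rw [h1, ← div_eq_mul_inv, div_div,
      div_eq_div_iff (mul_ne_zero (pow_ne_zero 2 hXpos.ne') hXpos.ne')
        (pow_ne_zero 2 (mul_pos hp hC).ne')]
    linear_combination (q*(1 - Real.cos E)^3) * hq2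
  · -- energy
    rw [hderiv_eq t ht]
    have e1 : (p * Real.sin E * (q*(1 - Real.cos E))⁻¹)^2
        = U₀ * (Real.sin E)^2 / (p * (1 - Real.cos E)^2) := by
      have hXpos : 0 < q * (1 - Real.cos E) := mul_pos hq hC
      rw [mul_pow, inv_pow, ← div_eq_mul_inv,
        div_eq_div_iff (pow_ne_zero 2 hXpos.ne') (mul_pos hp (pow_pos hC 2)).ne']
      linear_combination (-(Real.sin E^2*(1 - Real.cos E)^2)) * hq2
    rw [e1]
    have e2 : (Real.sin E)^2 = (1 - Real.cos E) * (2 - (1 - Real.cos E)) := by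
      linear_combination hsc
    rw [e2]
    have hr₂t : r₂ t = p * (1 - Real.cos E) := rfl
    rw [hr₂t]
    have e3 : U₀ * ((1 - Real.cos E) * (2 - (1 - Real.cos E))) / (p * (1 - Real.cos E)^2) / 2
        - U₀ / (p * (1 - Real.cos E)) = -U₀/(2*p) := by
      field_simp [hp.ne', hC.ne']
      have hC' : 1 - Real.cos E ≠ 0 := hC.ne'
      rw [div_eq_iff hC']
      ring
    rw [e3, div_eq_iff (mul_pos (by norm_num : (0:ℝ) < 2) hp).ne']
    linarith [hp2h]

end KeplerProof

open KeplerProof in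
/-- For `0 ≤ a < b`: for any energy `h ≥ 0` there is exactly one solution arc of
energy `h` joining `a` to `b`, and it is increasing.  For `-U₀/b < h < 0` there
are exactly two such arcs: one increasing from `a` to `b`, and one increasing
from `a` up to `-U₀/h` and then decreasing down to `b`. -/
theorem kepler_arcs_of_given_energy (U₀ : ℝ) (hU₀ : 0 < U₀)
    (a b : ℝ) (ha : 0 ≤ a) (hab : a < b) :
    (∀ h : ℝ, 0 ≤ h →
      (∃ τ r, IsKeplerArc U₀ h a b τ r ∧ StrictMonoOn r (Icc 0 τ)) ∧
      (∀ τ₁ r₁ τ₂ r₂, IsKeplerArc U₀ h a b τ₁ r₁ → IsKeplerArc U₀ h a b τ₂ r₂ →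
        τ₁ = τ₂ ∧ EqOn r₁ r₂ (Icc 0 τ₁))) ∧
    (∀ h : ℝ, -U₀ / b < h → h < 0 →
      ∃ τ₁ r₁ τ₂ r₂,
        IsKeplerArc U₀ h a b τ₁ r₁ ∧ StrictMonoOn r₁ (Icc 0 τ₁) ∧
        IsKeplerArc U₀ h a b τ₂ r₂ ∧
        (∃ t₀ ∈ Ioo 0 τ₂, r₂ t₀ = -U₀ / h ∧
          StrictMonoOn r₂ (Icc 0 t₀) ∧ StrictAntiOn r₂ (Icc t₀ τ₂)) ∧
        (∀ τ r, IsKeplerArc U₀ h a b τ r →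
          (τ = τ₁ ∧ EqOn r r₁ (Icc 0 τ)) ∨ (τ = τ₂ ∧ EqOn r r₂ (Icc 0 τ)))) := by
  have hbpos : 0 < b := lt_of_le_of_lt ha hab
  constructor
  · -- nonnegative energy
    intro h hh0
    have hb : 0 < 2*U₀ + 2*h*b := by nlinarith [mul_nonneg hh0 hbpos.le]
    constructor
    · obtain ⟨τ, r, harc, hmono, _⟩ := exists_mono_arc hU₀ ha hab hb
      exact ⟨τ, r, harc, hmono⟩
    · intro τ₁ r₁ τ₂ r₂ h1 h2
      have hM1 : ∀ t ∈ Ioo 0 τ₁, 0 < deriv r₁ t := by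
        rcases arc_trichotomy hU₀ hab h1 with hM | ⟨hneg, _⟩
        · exact hM
        · exact absurd hneg (not_lt.2 hh0)
      have hM2 : ∀ t ∈ Ioo 0 τ₂, 0 < deriv r₂ t := by
        rcases arc_trichotomy hU₀ hab h2 with hM | ⟨hneg, _⟩
        · exact hM
        · exact absurd hneg (not_lt.2 hh0)
      obtain ⟨hτ1eq, hch1⟩ := arc_char_M hU₀ ha hab hb h1 hM1
      obtain ⟨hτ2eq, hch2⟩ := arc_char_M hU₀ ha hab hb h2 hM2
      have hden : ∀ s, 0 ≤ s → s < b → 0 < 2*U₀ + 2*h*s := fun s h0 hs =>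
        den_pos hU₀ hbpos hb h0 hs.le
      obtain ⟨_, _, hTm, _⟩ := kT_pack hU₀ ha hab hden (int_M hU₀ ha hab hb)
      have hττ : τ₁ = τ₂ := by rw [hτ1eq, hτ2eq]
      refine ⟨hττ, ?_⟩
      intro t ht
      have e1 := hch1 t ht
      have e2 := hch2 t (by rw [← hττ]; exact ht)
      exact hTm.injOn e1.1 e2.1 (by rw [e1.2, e2.2])
  · -- negative energy
    intro h hhb hh
    have hb : 0 < 2*U₀ + 2*h*b := by
      have h1 : -U₀ < h * b := (div_lt_iff₀ hbpos).1 hhb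
      linarith
    have hbm : b < -U₀/h := by
      rw [lt_div_iff_of_neg hh]
      linarith
    obtain ⟨τ₁, r₁, harc1, hmono1, hd1⟩ := exists_mono_arc hU₀ ha hab hb
    obtain ⟨τ₂, r₂, t₀, harc2, ht₀, hrt₀, hmono2, hanti2, hd0, hdp, hdn⟩ :=
      exists_ud_arc hU₀ ha hab hh hbm
    refine ⟨τ₁, r₁, τ₂, r₂, harc1, hmono1, harc2, ⟨t₀, ht₀, hrt₀, hmono2, hanti2⟩, ?_⟩
    intro τ r harc
    obtain ⟨hτ1eq, hch1⟩ := arc_char_M hU₀ ha hab hb harc1 hd1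
    obtain ⟨ht₀eq, hτ2eq, hch2a, hch2b⟩ :=
      arc_char_UD hU₀ ha hab hh hbm harc2 ht₀ hd0 hdp hdn
    have ham : a < -U₀/h := lt_trans hab hbm
    have hdenm : ∀ s, 0 ≤ s → s < -U₀/h → 0 < 2*U₀ + 2*h*s := fun s _ hs =>
      den_pos_lt_m hh hs
    obtain ⟨_, _, hTm, _⟩ := kT_pack hU₀ ha ham hdenm (int_UD hU₀ ha hh ham)
    have hsub : Icc a b ⊆ Icc a (-U₀/h) := Icc_subset_Icc le_rfl hbm.le
    rcases arc_trichotomy hU₀ hab harc with hM | ⟨_, t₀', ht₀', hrt₀', hz', hp', hn'⟩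
    · left
      obtain ⟨hτeq, hch⟩ := arc_char_M hU₀ ha hab hb harc hM
      have hττ : τ = τ₁ := by rw [hτeq, hτ1eq]
      refine ⟨hττ, ?_⟩
      intro t ht
      have e1 := hch t ht
      have e2 := hch1 t (by rw [← hττ]; exact ht)
      exact hTm.injOn (hsub e1.1) (hsub e2.1) (by rw [e1.2, e2.2])
    · right
      obtain ⟨ht₀eq', hτeq', hcha', hchb'⟩ :=
        arc_char_UD hU₀ ha hab hh hbm harc ht₀' hz' hp' hn'
      have htt : t₀' = t₀ := by rw [ht₀eq', ht₀eq]
      have hττ : τ = τ₂ := by rw [hτeq', hτ2eq]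
      refine ⟨hττ, ?_⟩
      intro t ht
      rcases le_total t t₀' with hle | hge
      · have e1 := hcha' t ⟨ht.1, hle⟩
        have e2 := hch2a t ⟨ht.1, by rw [← htt]; exact hle⟩
        exact hTm.injOn e1.1 e2.1 (by rw [e1.2, e2.2])
      · have e1 := hchb' t ⟨hge, ht.2⟩
        have e2 := hch2b t ⟨htt ▸ hge, by rw [← hττ]; exact ht.2⟩
        apply hTm.injOn e1.1 e2.1
        rw [e1.2, e2.2, htt]
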